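/- For every natural number g, ∑_{ℓ=0}^{g} [C(2ℓ,ℓ)/(2ℓ+1)] · [C(2(g-ℓ),g-ℓ)/(2(g-ℓ)+1)] = 2 · 16^g / ((g+1)² · C(2g+2,g+1)). -/

import Mathlib

open Finset

/-- `c n = C(2n,n)` as a rational. -/
noncomputable def cb (n : ℕ) : ℚ := ((2 * n).choose n : ℚ)

lemma cb_pos (n : ℕ) : 0 < cb n := by
  have := Nat.centralBinom_pos n
  unfold cb
  rw [show (2*n).choose n = n.centralBinom from rfl]
  exact_mod_cast this

lemma cb_ne (n : ℕ) : cb n ≠ 0 := (cb_pos n).ne'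

lemma cb_succ (n : ℕ) : ((n : ℚ) + 1) * cb (n + 1) = 2 * (2 * n + 1) * cb n := by
  have h := Nat.succ_mul_centralBinom_succ n
  unfold cb
  rw [show (2*(n+1)).choose (n+1) = (n+1).centralBinom from rfl,
      show (2*n).choose n = n.centralBinom from rfl]
  exact_mod_cast h

/-- summand -/
noncomputable def u (a b : ℕ) : ℚ := cb a * cb b / ((2 * a + 1) * (2 * b + 1))

/-- Zeilberger certificate function. -/
noncomputable def Fc (g k : ℕ) : ℚ :=
  -(k : ℚ) * (3 * g + 4 - 2 * k) / (((g : ℚ) + 1) * (2 * g - 2 * k + 3)) * cb k * cb (g + 1 - k)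

lemma key (a b : ℕ) :
    ((a : ℚ) + b + 2) * (2 * (a + b) + 3) * u a (b + 1)
      - 8 * ((a : ℚ) + b + 1) ^ 2 * u a b
    = Fc (a + b) (a + 1) - Fc (a + b) a := by
  have h1 : (a + b) + 1 - (a + 1) = b := by omega
  have h2 : (a + b) + 1 - a = b + 1 := by omega
  unfold Fc u
  rw [h1, h2]
  have hca := cb_succ a
  have hcb := cb_succ b
  have ha1 : (a : ℚ) + 1 ≠ 0 := by positivity
  have hb1 : (b : ℚ) + 1 ≠ 0 := by positivity
  have hca' : cb (a + 1) = 2 * (2 * a + 1) * cb a / ((a : ℚ) + 1) := by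
    field_simp; linarith [hca]
  have hcb' : cb (b + 1) = 2 * (2 * b + 1) * cb b / ((b : ℚ) + 1) := by
    field_simp; linarith [hcb]
  rw [hca', hcb']
  have h2a : (2 * (a : ℚ) + 1) ≠ 0 := by positivity
  have h2b : (2 * (b : ℚ) + 1) ≠ 0 := by positivity
  have h2b3 : (2 * (b : ℚ) + 3) ≠ 0 := by positivity
  have hab1 : ((a : ℚ) + b + 1) ≠ 0 := by positivity
  have e1 : 2 * ((a : ℚ) + b) - 2 * (a + 1) + 3 = 2 * b + 1 := by ring
  have e2 : 2 * ((a : ℚ) + b) - 2 * a + 3 = 2 * b + 3 := by ring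
  push_cast
  rw [e1, e2]
  field_simp
  ring

lemma Fc_zero (g : ℕ) : Fc g 0 = 0 := by
  unfold Fc; simp

lemma Fc_top (g : ℕ) : Fc g (g + 1) = -((g : ℚ) + 2) * cb (g + 1) := by
  unfold Fc
  rw [Nat.sub_self]
  have h : cb 0 = 1 := by unfold cb; norm_num
  rw [h]
  have hg1 : ((g : ℚ) + 1) ≠ 0 := by positivity
  push_cast
  rw [show 2 * (g : ℚ) - 2 * ((g : ℚ) + 1) + 3 = 1 by ring,
      show -((g : ℚ) + 1) * (3 * (g : ℚ) + 4 - 2 * ((g : ℚ) + 1))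
        = ((g : ℚ) + 1) * (-((g : ℚ) + 2)) by ring,
      mul_one]
  field_simp

lemma main (g : ℕ) :
    ∑ ℓ ∈ Finset.range (g + 1), u ℓ (g - ℓ)
      = 2 * 16 ^ g / (((g : ℚ) + 1) ^ 2 * cb (g + 1)) := by
  induction g with
  | zero =>
      norm_num [u, cb]
  | succ g ih =>
      have hstep : ∀ ℓ ∈ Finset.range (g + 1),
          ((g : ℚ) + 2) * (2 * g + 3) * u ℓ (g + 1 - ℓ)
            = 8 * ((g : ℚ) + 1) ^ 2 * u ℓ (g - ℓ) + (Fc g (ℓ + 1) - Fc g ℓ) := by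
        intro ℓ hl
        have hle : ℓ ≤ g := Nat.lt_succ_iff.mp (Finset.mem_range.mp hl)
        have hk := key ℓ (g - ℓ)
        have hab : ℓ + (g - ℓ) = g := by omega
        have hc : ((g - ℓ : ℕ) : ℚ) = (g : ℚ) - ℓ := by
          push_cast [Nat.cast_sub hle]; ring
        rw [hab, hc] at hk
        have hb1 : g - ℓ + 1 = g + 1 - ℓ := by omega
        rw [hb1] at hk
        have e1 : (ℓ : ℚ) + ((g : ℚ) - ℓ) + 2 = (g : ℚ) + 2 := by ring
        have e2 : (2 : ℚ) * ((ℓ : ℚ) + ((g : ℚ) - ℓ)) + 3 = 2 * g + 3 := by ring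
        have e3 : (ℓ : ℚ) + ((g : ℚ) - ℓ) + 1 = (g : ℚ) + 1 := by ring
        rw [e1, e2, e3] at hk
        linarith [hk]
      have hsum :
          ((g : ℚ) + 2) * (2 * g + 3) * ∑ ℓ ∈ Finset.range (g + 2), u ℓ (g + 1 - ℓ)
            = 8 * ((g : ℚ) + 1) ^ 2 * ∑ ℓ ∈ Finset.range (g + 1), u ℓ (g - ℓ) := by
        rw [Finset.sum_range_succ, mul_add, Finset.mul_sum,
            Finset.sum_congr rfl hstep, Finset.sum_add_distrib,
            Finset.sum_range_sub (fun k => Fc g k), Fc_zero, Fc_top]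
        have hu : u (g + 1) (g + 1 - (g + 1)) = cb (g + 1) / (2 * (g : ℚ) + 3) := by
          rw [Nat.sub_self]
          unfold u
          have h0 : cb 0 = 1 := by unfold cb; norm_num
          rw [h0]
          push_cast
          ring_nf
        rw [hu, ← Finset.mul_sum]
        have h2g3 : (2 * (g : ℚ) + 3) ≠ 0 := by positivity
        field_simp
        ring
      rw [ih] at hsum
      have hcbne := cb_ne (g + 1)
      have hcbne2 := cb_ne (g + 2)
      have hrel := cb_succ (g + 1)
      have hg1 : ((g : ℚ) + 1) ≠ 0 := by positivity
      have hg2 : ((g : ℚ) + 2) ≠ 0 := by positivity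
      have h2g3 : (2 * (g : ℚ) + 3) ≠ 0 := by positivity
      have hrel' : ((g : ℚ) + 2) * cb (g + 2) = 2 * (2 * g + 3) * cb (g + 1) := by
        push_cast at hrel ⊢; linarith [hrel]
      have target : (2 : ℚ) * 16 ^ (g + 1) / (((g : ℚ) + 1 + 1) ^ 2 * cb (g + 2))
          = 8 * ((g : ℚ) + 1) ^ 2 *
              (2 * 16 ^ g / (((g : ℚ) + 1) ^ 2 * cb (g + 1)))
            / (((g : ℚ) + 2) * (2 * g + 3)) := by
        rw [show ((g : ℚ) + 1 + 1) = ((g : ℚ) + 2) by ring]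
        field_simp
        linear_combination (-16 * (16:ℚ) ^ g * ((g:ℚ)+2) * ((g:ℚ)+1) ^ 2 + 8 * (16:ℚ) ^ g * (2 * (g:ℚ) ^ 3 + 8 * (g:ℚ) ^ 2 + 10 * (g:ℚ) + 3)) * hrel'
      push_cast
      rw [show g + 1 + 1 = g + 2 from rfl, target,
          eq_div_iff (mul_ne_zero hg2 h2g3)]
      linarith [hsum]

/-- For every natural number `g`,
`∑_{ℓ=0}^{g} [C(2ℓ,ℓ)/(2ℓ+1)]·[C(2(g-ℓ),g-ℓ)/(2(g-ℓ)+1)] = 2·16^g/((g+1)²·C(2g+2,g+1))`. -/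
theorem catalan_type_convolution (g : ℕ) :
    ∑ ℓ ∈ Finset.range (g + 1),
        (((2 * ℓ).choose ℓ : ℚ) / (2 * (ℓ : ℚ) + 1)) *
          (((2 * (g - ℓ)).choose (g - ℓ) : ℚ) / (2 * ((g : ℚ) - (ℓ : ℚ)) + 1))
      = 2 * 16 ^ g / (((g : ℚ) + 1) ^ 2 * ((2 * g + 2).choose (g + 1) : ℚ)) := by
  have h := main g
  have hc : ((2 * g + 2).choose (g + 1) : ℚ) = cb (g + 1) := by
    unfold cb
    norm_num [show 2 * (g + 1) = 2 * g + 2 from by ring]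
  rw [hc]
  rw [← h]
  apply Finset.sum_congr rfl
  intro ℓ hl
  have hle : ℓ ≤ g := Nat.lt_succ_iff.mp (Finset.mem_range.mp hl)
  unfold u cb
  rw [Nat.cast_sub hle]
  rw [div_mul_div_comm]
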